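/- Let M₀ be selfadjoint and bounded on a Hilbert space H such that M₀ is strictly positive definite on its range R(M₀) (i.e. ⟨x|M₀x⟩ ≥ c‖x‖² for x ∈ R(M₀)‾) and M₁ bounded with Re M₁ strictly positive definite on the null space N(M₀) (i.e. ⟨x|Re M₁ x⟩ ≥ c‖x‖² for x ∈ N(M₀)). Then there exist ν₀, c₀ > 0 such that ν M₀ + Re M₁ ≥ c₀ for all ν ≥ ν₀. -/

import Mathlib

/-- If `M₀` is bounded, selfadjoint, non-negative and strictly positive
definite on (the closure of) its range, and `Re M₁` is strictly positive definite on the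
null space of `M₀`, then there exist `ν₀, c₀ > 0` such that
`ν M₀ + Re M₁ ≥ c₀` for all `ν ≥ ν₀`. -/
theorem stmt16 {H : Type*} [NormedAddCommGroup H] [InnerProductSpace ℂ H] [CompleteSpace H]
    (M₀ M₁ : H →L[ℂ] H) (hsa : IsSelfAdjoint M₀)
    (hnn : ∀ x : H, 0 ≤ (inner ℂ x (M₀ x) : ℂ).re)
    {c : ℝ} (hc : 0 < c)
    (hrange : ∀ x ∈ (LinearMap.range (M₀ : H →ₗ[ℂ] H)).topologicalClosure,
      c * ‖x‖ ^ 2 ≤ (inner ℂ x (M₀ x) : ℂ).re)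
    (hker : ∀ x ∈ LinearMap.ker (M₀ : H →ₗ[ℂ] H),
      c * ‖x‖ ^ 2 ≤ (inner ℂ x (M₁ x) : ℂ).re) :
    ∃ ν₀ > (0 : ℝ), ∃ c₀ > (0 : ℝ), ∀ ν ≥ ν₀, ∀ x : H,
      c₀ * ‖x‖ ^ 2 ≤ ν * (inner ℂ x (M₀ x) : ℂ).re + (inner ℂ x (M₁ x) : ℂ).re := by
  classical
  set Kr : ℝ := ‖M₁‖ with hKr
  have hKr0 : 0 ≤ Kr := norm_nonneg _
  set K : Submodule ℂ H := LinearMap.ker (M₀ : H →ₗ[ℂ] H) with hKdef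
  have hKclosed : IsClosed (K : Set H) := by
    have : K = LinearMap.ker (M₀ : H →ₗ[ℂ] H) := rfl
    rw [this]
    exact ContinuousLinearMap.isClosed_ker M₀
  haveI : CompleteSpace K := hKclosed.completeSpace_coe
  -- orthogonal complement of K is the closure of the range
  have horth : Kᗮ ≤ (LinearMap.range (M₀ : H →ₗ[ℂ] H)).topologicalClosure := by
    have hle : (LinearMap.range (M₀ : H →ₗ[ℂ] H))ᗮ ≤ K := by
      intro w hw
      have hMw : M₀ w = 0 := by
        have : ∀ y : H, (inner ℂ (M₀ w) y : ℂ) = 0 := by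
          intro y
          have h1 : (inner ℂ (M₀ w) y : ℂ) = inner ℂ w (M₀ y) := by
            conv_lhs => rw [← hsa.adjoint_eq]
            exact ContinuousLinearMap.adjoint_inner_left M₀ y w
          have h2 : (inner ℂ w (M₀ y) : ℂ) = 0 := by
            have := hw (M₀ y) ⟨y, rfl⟩
            rw [← inner_conj_symm, this, map_zero]
          rw [h1, h2]
        have := this (M₀ w)
        exact inner_self_eq_zero.mp this
      exact hMw
    calc Kᗮ ≤ (LinearMap.range (M₀ : H →ₗ[ℂ] H))ᗮᗮ := Submodule.orthogonal_le hle
    _ = (LinearMap.range (M₀ : H →ₗ[ℂ] H)).topologicalClosure :=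
        Submodule.orthogonal_orthogonal_eq_closure _
  refine ⟨(Kr + 2 * Kr ^ 2 / c + c) / c + 1, by positivity, c / 2, by positivity, ?_⟩
  intro ν hν x
  set u : H := (K.orthogonalProjectionOnto x : H) with hu
  set v : H := x - u with hv
  have huK : u ∈ K := (K.orthogonalProjectionOnto x).2
  have hvK : v ∈ Kᗮ := Submodule.sub_starProjection_mem_orthogonal (K := K) x
  have hxuv : x = u + v := by simp [hv]
  have huv : (inner ℂ u v : ℂ) = 0 := hvK u huK
  have hnorm : ‖x‖ ^ 2 = ‖u‖ ^ 2 + ‖v‖ ^ 2 := by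
    rw [hxuv]
    simpa [pow_two] using norm_add_sq_eq_norm_sq_add_norm_sq_of_inner_eq_zero u v huv
  have hM₀u : M₀ u = 0 := huK
  -- inner x (M₀ x) = inner v (M₀ v)
  have hinner0 : (inner ℂ x (M₀ x) : ℂ) = inner ℂ v (M₀ v) := by
    have huMv : (inner ℂ u (M₀ v) : ℂ) = 0 := by
      have h1 : (inner ℂ (M₀ u) v : ℂ) = inner ℂ u (M₀ v) := by
        conv_lhs => rw [← hsa.adjoint_eq]
        exact ContinuousLinearMap.adjoint_inner_left M₀ v u
      rw [← h1, hM₀u, inner_zero_left]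
    rw [hxuv]
    simp only [map_add, hM₀u, zero_add, inner_add_left, huMv, zero_add]
  have hM0v : c * ‖v‖ ^ 2 ≤ (inner ℂ v (M₀ v) : ℂ).re := hrange v (horth hvK)
  have hM1u : c * ‖u‖ ^ 2 ≤ (inner ℂ u (M₁ u) : ℂ).re := hker u huK
  -- cross term bounds
  have cross : ∀ a b : H, -(Kr * ‖a‖ * ‖b‖) ≤ (inner ℂ a (M₁ b) : ℂ).re := by
    intro a b
    have h1 : ‖(inner ℂ a (M₁ b) : ℂ)‖ ≤ ‖a‖ * ‖M₁ b‖ := norm_inner_le_norm a (M₁ b)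
    have h2 : ‖M₁ b‖ ≤ Kr * ‖b‖ := M₁.le_opNorm b
    have h3 : |(inner ℂ a (M₁ b) : ℂ).re| ≤ ‖(inner ℂ a (M₁ b) : ℂ)‖ := Complex.abs_re_le_norm _
    have := neg_abs_le (inner ℂ a (M₁ b) : ℂ).re
    nlinarith [norm_nonneg a, norm_nonneg b]
  have hM1x : c * ‖u‖ ^ 2 - 2 * Kr * ‖u‖ * ‖v‖ - Kr * ‖v‖ ^ 2
      ≤ (inner ℂ x (M₁ x) : ℂ).re := by
    have hexp : (inner ℂ x (M₁ x) : ℂ).re = (inner ℂ u (M₁ u) : ℂ).re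
        + (inner ℂ u (M₁ v) : ℂ).re + (inner ℂ v (M₁ u) : ℂ).re + (inner ℂ v (M₁ v) : ℂ).re := by
      rw [hxuv]
      simp only [map_add, inner_add_left, inner_add_right, Complex.add_re]
      ring
    have c1 := cross u v
    have c2 := cross v u
    have c3 := cross v v
    rw [hexp]
    nlinarith [sq_nonneg ‖v‖]
  have hν0 : 0 ≤ ν := le_trans (by positivity) hν
  have hM0x : ν * (c * ‖v‖ ^ 2) ≤ ν * (inner ℂ x (M₀ x) : ℂ).re := by
    rw [hinner0]
    exact mul_le_mul_of_nonneg_left hM0v hν0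
  have hνc : Kr * c + 2 * Kr ^ 2 + c * c ≤ ν * c * c := by
    have h1 : (Kr + 2 * Kr ^ 2 / c + c) / c + 1 ≤ ν := hν
    have h2 : 2 * Kr ^ 2 / c * c = 2 * Kr ^ 2 := div_mul_cancel₀ _ hc.ne'
    have h3 : (Kr + 2 * Kr ^ 2 / c + c) / c * c = Kr + 2 * Kr ^ 2 / c + c :=
      div_mul_cancel₀ _ hc.ne'
    nlinarith [mul_le_mul_of_nonneg_right h1 hc.le,
      mul_le_mul_of_nonneg_right (mul_le_mul_of_nonneg_right h1 hc.le) hc.le]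
  rw [hnorm]
  have key : c / 2 * (‖u‖ ^ 2 + ‖v‖ ^ 2) ≤ ν * (c * ‖v‖ ^ 2)
      + (c * ‖u‖ ^ 2 - 2 * Kr * ‖u‖ * ‖v‖ - Kr * ‖v‖ ^ 2) := by
    nlinarith [sq_nonneg (c * ‖u‖ - 2 * Kr * ‖v‖), sq_nonneg ‖v‖, sq_nonneg ‖u‖,
      mul_pos hc hc, norm_nonneg u, norm_nonneg v,
      mul_le_mul_of_nonneg_right hνc (sq_nonneg ‖v‖)]
  linarith
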